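/- Let $(M_k)_{k=1}^{\infty}$ be a bounded martingale difference sequence of random vectors in $\mathbb{R}^m$ (i.e., $\|M_k\| \le c$ surely for some constant $c$, and $\mathbb{E}[M_k \mid M_1, \ldots, M_{k-1}] = 0$ almost surely for all $k$). Let $(Z_k)_{k=1}^{\infty}$ be random vectors taking values almost surely in a compact convex set $\overline{\Gamma} \subseteq \mathbb{R}^m$, and suppose $X_k = M_k + Z_k$. Then $\lim_{k\to\infty} \mathrm{dist}\left(\frac{1}{k}\sum_{i=1}^k X_i, \overline{\Gamma}\right) = 0$ almost surely, where $\mathrm{dist}(x, \overline{\Gamma})$ is the Euclidean distance from $x$ to $\overline{\Gamma}$. -/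

import Mathlib

open MeasureTheory Filter Finset

private lemma kronecker_aux {E : Type*} [NormedAddCommGroup E] [NormedSpace ℝ E] {u : ℕ → E} {L : E}
    (h : Tendsto (fun n : ℕ => ∑ k ∈ range n, ((k : ℝ) + 1)⁻¹ • u k) atTop (nhds L)) :
    Tendsto (fun n : ℕ => (n : ℝ)⁻¹ • ∑ k ∈ range n, u k) atTop (nhds 0) := by
  set s : ℕ → E := fun n => ∑ k ∈ range n, ((k : ℝ) + 1)⁻¹ • u k with hs
  have key : ∀ n : ℕ, ∑ k ∈ range n, u k = (n : ℝ) • s n - ∑ k ∈ range n, s k := by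
    intro n
    induction n with
    | zero => simp [hs]
    | succ n ih =>
      rw [sum_range_succ, ih, sum_range_succ (f := s)]
      have hsucc : s (n + 1) = s n + ((n : ℝ) + 1)⁻¹ • u n := by
        simp [hs, sum_range_succ]
      rw [hsucc]
      push_cast
      rw [smul_add, smul_smul, mul_inv_cancel₀ (by positivity : ((n : ℝ) + 1) ≠ 0), one_smul,
        add_smul, one_smul]
      abel
  have h2 : Tendsto (fun n : ℕ => s n - (n : ℝ)⁻¹ • ∑ k ∈ range n, s k) atTop (nhds 0) := by
    have := h.sub h.cesaro_smul
    simpa using this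
  apply h2.congr'
  filter_upwards [eventually_ge_atTop 1] with n hn
  have hn' : ((n : ℝ)) ≠ 0 := by
    exact_mod_cast (Nat.pos_of_ne_zero (by omega)).ne'
  rw [key n, smul_sub, smul_smul, inv_mul_cancel₀ hn', one_smul]

private lemma sum_inv_sq_le_two : ∀ n : ℕ, ∑ k ∈ range n, (((k : ℝ) + 1) ^ 2)⁻¹ ≤ 2 := by
  have H : ∀ n : ℕ, ∑ k ∈ range n, (((k : ℝ) + 1) ^ 2)⁻¹ ≤ 2 - 2 / ((n : ℝ) + 1) := by
    intro n
    induction n with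
    | zero => simp
    | succ n ih =>
      rw [sum_range_succ]
      have h1 : (0 : ℝ) < (n : ℝ) + 1 := by positivity
      have h2 : (0 : ℝ) < (n : ℝ) + 2 := by positivity
      have key : (((n : ℝ) + 1) ^ 2)⁻¹ ≤ 2 / ((n : ℝ) + 1) - 2 / ((n : ℝ) + 2) := by
        rw [div_sub_div _ _ h1.ne' h2.ne', inv_eq_one_div,
          div_le_div_iff₀ (by positivity) (by positivity)]
        ring_nf
        nlinarith [sq_nonneg ((n : ℝ))]
      push_cast
      have : ((n : ℝ) + 1) + 1 = (n : ℝ) + 2 := by ring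
      rw [this]
      linarith
  intro n
  refine (H n).trans ?_
  have : 0 ≤ 2 / ((n : ℝ) + 1) := by positivity
  linarith


/-- if X_k = M_k + Z_k with (M_k) a bounded martingale difference
sequence and Z_k valued a.s. in a compact convex set G, then the distance of the
running averages of X to G tends to 0 almost surely. -/
theorem stmt_16 {Ω : Type*} [MeasurableSpace Ω] (P : Measure Ω) [IsProbabilityMeasure P]
    {m : ℕ} (M Z X : ℕ → Ω → EuclideanSpace ℝ (Fin m))
    (hMmeas : ∀ k, Measurable (M k))
    (c : ℝ) (hMbdd : ∀ k ω, ‖M k ω‖ ≤ c)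
    (hMD : ∀ k,
      P[M k | ⨆ i ∈ Finset.range k, MeasurableSpace.comap (M i) inferInstance] =ᵐ[P] 0)
    (G : Set (EuclideanSpace ℝ (Fin m))) (hGcomp : IsCompact G) (hGconv : Convex ℝ G)
    (hZG : ∀ k, ∀ᵐ ω ∂P, Z k ω ∈ G)
    (hX : ∀ k ω, X k ω = M k ω + Z k ω) :
    ∀ᵐ ω ∂P, Tendsto
      (fun k : ℕ => Metric.infDist ((k : ℝ)⁻¹ • ∑ i ∈ Finset.range k, X i ω) G)
      atTop (nhds 0) := by
  classical
  set c' : ℝ := max c 0 with hc'def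
  have hc'0 : 0 ≤ c' := le_max_right _ _
  have hMbdd' : ∀ k ω, ‖M k ω‖ ≤ c' := fun k ω => (hMbdd k ω).trans (le_max_left _ _)
  -- the filtration
  set ℱ : Filtration ℕ ‹MeasurableSpace Ω› :=
    ⟨fun n => ⨆ i ∈ Finset.range n, MeasurableSpace.comap (M i) inferInstance,
      fun n p hnp => biSup_mono fun i hi =>
        Finset.mem_range.mpr ((Finset.mem_range.mp hi).trans_le hnp),
      fun n => iSup₂_le fun i _ => (hMmeas i).comap_le⟩ with hℱdef
  have hMD' : ∀ k, P[M k | ℱ k] =ᵐ[P] 0 := hMD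
  -- coordinates
  set g : Fin m → ℕ → Ω → ℝ := fun q k ω => M k ω q with hgdef
  have habs : ∀ (q : Fin m) (x : EuclideanSpace ℝ (Fin m)), |x q| ≤ ‖x‖ := by
    intro q x
    rw [EuclideanSpace.norm_eq, ← Real.sqrt_sq_eq_abs]
    apply Real.sqrt_le_sqrt
    have := Finset.single_le_sum (f := fun i => ‖x i‖ ^ 2) (fun i _ => by positivity)
      (Finset.mem_univ q)
    simpa [Real.norm_eq_abs, sq_abs] using this
  have hgbdd : ∀ q k ω, |g q k ω| ≤ c' := fun q k ω => (habs q (M k ω)).trans (hMbdd' k ω)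
  have hgmeas : ∀ q k, Measurable (g q k) := fun q k =>
    ((EuclideanSpace.proj q).continuous.measurable).comp (hMmeas k)
  have hgint : ∀ q k, Integrable (g q k) P := by
    intro q k
    refine Integrable.mono' (integrable_const c') ((hgmeas q k).aestronglyMeasurable)
      (ae_of_all _ fun ω => ?_)
    simpa [Real.norm_eq_abs] using hgbdd q k ω
  have hg_smF : ∀ (q : Fin m) (j k : ℕ), j < k → StronglyMeasurable[ℱ k] (g q j) := by
    intro q j k hjk
    have h1 : Measurable[MeasurableSpace.comap (M j) inferInstance] (M j) :=
      measurable_iff_comap_le.mpr le_rfl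
    have h2 : Measurable[MeasurableSpace.comap (M j) inferInstance] (g q j) :=
      ((EuclideanSpace.proj q).continuous.measurable).comp h1
    have hle : MeasurableSpace.comap (M j) inferInstance ≤ ℱ k :=
      le_biSup (fun i => MeasurableSpace.comap (M i) inferInstance) (Finset.mem_range.mpr hjk)
    exact (h2.mono hle le_rfl).stronglyMeasurable
  have hMint : ∀ k, Integrable (M k) P := fun k =>
    Integrable.mono' (integrable_const c') (hMmeas k).aestronglyMeasurable
      (ae_of_all _ fun ω => hMbdd' k ω)
  have hgcond : ∀ (q : Fin m) (k : ℕ), P[g q k | ℱ k] =ᵐ[P] 0 := by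
    intro q k
    have h0 : (0 : Ω → ℝ) =ᵐ[P] P[g q k | ℱ k] := by
      refine ae_eq_condExp_of_forall_setIntegral_eq (ℱ.le k) (hgint q k)
        (fun s _ _ => (integrable_zero _ _ _).integrableOn) (fun s hs hμs => ?_)
        (stronglyMeasurable_zero.aestronglyMeasurable)
      have hM0 : ∫ ω in s, M k ω ∂P = 0 := by
        rw [← setIntegral_condExp (ℱ.le k) (hMint k) hs,
          integral_congr_ae (ae_restrict_of_ae (hMD' k))]
        simp
      have hcomm : ∫ ω in s, (EuclideanSpace.proj q) (M k ω) ∂P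
          = (EuclideanSpace.proj q) (∫ ω in s, M k ω ∂P) :=
        (EuclideanSpace.proj q).integral_comp_comm (hMint k).integrableOn
      rw [hM0, map_zero] at hcomm
      simpa using hcomm.symm
    exact h0.symm
  have horth : ∀ (q : Fin m) (j k : ℕ), j < k → ∫ ω, g q j ω * g q k ω ∂P = 0 := by
    intro q j k hjk
    have hmul_int : Integrable (g q j * g q k) P := by
      refine Integrable.mono' (integrable_const (c' * c'))
        (((hgmeas q j).mul (hgmeas q k)).aestronglyMeasurable) (ae_of_all _ fun ω => ?_)
      simp only [Pi.mul_apply, Real.norm_eq_abs, abs_mul]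
      exact mul_le_mul (hgbdd q j ω) (hgbdd q k ω) (abs_nonneg _) hc'0
    have h1 : P[g q j * g q k | ℱ k] =ᵐ[P] g q j * P[g q k | ℱ k] :=
      condExp_mul_of_stronglyMeasurable_left (hg_smF q j k hjk) hmul_int (hgint q k)
    have h2 : P[g q j * g q k | ℱ k] =ᵐ[P] 0 := by
      refine h1.trans ?_
      filter_upwards [hgcond q k] with ω hω
      simp only [Pi.mul_apply, Pi.zero_apply] at hω ⊢
      rw [hω, mul_zero]
    calc ∫ ω, g q j ω * g q k ω ∂P = ∫ ω, (P[g q j * g q k | ℱ k]) ω ∂P :=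
          (integral_condExp (ℱ.le k)).symm
      _ = 0 := by rw [integral_congr_ae h2]; simp
  have hint2 : ∀ (q : Fin m) (j k : ℕ), Integrable (fun ω => g q j ω * g q k ω) P := by
    intro q j k
    refine Integrable.mono' (integrable_const (c' * c'))
      (((hgmeas q j).mul (hgmeas q k)).aestronglyMeasurable) (ae_of_all _ fun ω => ?_)
    simp only [Real.norm_eq_abs, abs_mul]
    exact mul_le_mul (hgbdd q j ω) (hgbdd q k ω) (abs_nonneg _) hc'0
  have horth' : ∀ (q : Fin m) (j k : ℕ), j ≠ k → ∫ ω, g q j ω * g q k ω ∂P = 0 := by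
    intro q j k hjk
    rcases hjk.lt_or_gt with h | h
    · exact horth q j k h
    · rw [show (fun ω => g q j ω * g q k ω) = fun ω => g q k ω * g q j ω from
        funext fun ω => mul_comm _ _]
      exact horth q k j h
  have hgsq : ∀ (q : Fin m) (j : ℕ), ∫ ω, g q j ω * g q j ω ∂P ≤ c' ^ 2 := by
    intro q j
    have h1 : ∫ ω, g q j ω * g q j ω ∂P ≤ ∫ _ω, c' ^ 2 ∂P := by
      refine integral_mono (hint2 q j j) (integrable_const _) fun ω => ?_
      have := hgbdd q j ω
      nlinarith [abs_nonneg (g q j ω), neg_abs_le (g q j ω), le_abs_self (g q j ω)]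
    simpa using h1
  -- the candidate martingales
  set t : Fin m → ℕ → Ω → ℝ :=
    fun q n ω => ∑ k ∈ range n, ((k : ℝ) + 1)⁻¹ * g q k ω with htdef
  have ht_adp : ∀ q, StronglyAdapted ℱ (t q) := by
    intro q n
    exact Finset.stronglyMeasurable_fun_sum _ fun k hk =>
      (hg_smF q k n (Finset.mem_range.mp hk)).const_mul _
  have ht_meas : ∀ q n, Measurable (t q n) := fun q n =>
    Finset.measurable_sum _ fun k _ => (hgmeas q k).const_mul _
  have ht_bdd : ∀ q n ω, |t q n ω| ≤ ∑ k ∈ range n, ((k : ℝ) + 1)⁻¹ * c' := by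
    intro q n ω
    refine (Finset.abs_sum_le_sum_abs _ _).trans (Finset.sum_le_sum fun k _ => ?_)
    rw [abs_mul, abs_of_nonneg (by positivity : (0:ℝ) ≤ ((k : ℝ) + 1)⁻¹)]
    exact mul_le_mul_of_nonneg_left (hgbdd q k ω) (by positivity)
  have ht_int : ∀ q n, Integrable (t q n) P := by
    intro q n
    refine Integrable.mono' (integrable_const (∑ k ∈ range n, ((k : ℝ) + 1)⁻¹ * c'))
      (ht_meas q n).aestronglyMeasurable (ae_of_all _ fun ω => ?_)
    simpa [Real.norm_eq_abs] using ht_bdd q n ω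
  have htsq_int : ∀ q n, Integrable (fun ω => (t q n ω) ^ 2) P := by
    intro q n
    refine Integrable.mono' (integrable_const ((∑ k ∈ range n, ((k : ℝ) + 1)⁻¹ * c') ^ 2))
      ((ht_meas q n).pow_const 2).aestronglyMeasurable (ae_of_all _ fun ω => ?_)
    have h1 := ht_bdd q n ω
    have h2 : (0:ℝ) ≤ ∑ k ∈ range n, ((k : ℝ) + 1)⁻¹ * c' :=
      le_trans (abs_nonneg _) h1
    rw [Real.norm_eq_abs, abs_pow]
    exact pow_le_pow_left₀ (abs_nonneg _) h1 2
  -- variance bound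
  have hvar : ∀ q n, ∫ ω, (t q n ω) ^ 2 ∂P ≤ 2 * c' ^ 2 := by
    intro q n
    have hexp : ∀ ω, (t q n ω) ^ 2 = ∑ j ∈ range n, ∑ k ∈ range n,
        (((j : ℝ) + 1)⁻¹ * ((k : ℝ) + 1)⁻¹) * (g q j ω * g q k ω) := by
      intro ω
      rw [sq, htdef]
      rw [Finset.sum_mul_sum]
      refine Finset.sum_congr rfl fun j _ => Finset.sum_congr rfl fun k _ => by ring
    have hsum : ∫ ω, (t q n ω) ^ 2 ∂P = ∑ j ∈ range n, ∑ k ∈ range n,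
        (((j : ℝ) + 1)⁻¹ * ((k : ℝ) + 1)⁻¹) * ∫ ω, g q j ω * g q k ω ∂P := by
      simp_rw [hexp]
      rw [integral_finset_sum _ (fun j _ =>
        integrable_finset_sum _ fun k _ => (hint2 q j k).const_mul _)]
      refine Finset.sum_congr rfl fun j _ => ?_
      rw [integral_finset_sum _ (fun k _ => (hint2 q j k).const_mul _)]
      exact Finset.sum_congr rfl fun k _ => integral_const_mul _ _
    rw [hsum]
    have hdiag : ∀ j ∈ range n, ∑ k ∈ range n,
        (((j : ℝ) + 1)⁻¹ * ((k : ℝ) + 1)⁻¹) * ∫ ω, g q j ω * g q k ω ∂P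
        = (((j : ℝ) + 1) ^ 2)⁻¹ * ∫ ω, g q j ω * g q j ω ∂P := by
      intro j hj
      rw [Finset.sum_eq_single_of_mem j hj]
      · rw [← mul_inv, ← sq]
      · intro k _ hkj
        rw [horth' q j k (Ne.symm hkj), mul_zero]
    rw [Finset.sum_congr rfl hdiag]
    calc ∑ j ∈ range n, (((j : ℝ) + 1) ^ 2)⁻¹ * ∫ ω, g q j ω * g q j ω ∂P
        ≤ ∑ j ∈ range n, (((j : ℝ) + 1) ^ 2)⁻¹ * c' ^ 2 :=
          Finset.sum_le_sum fun j _ =>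
            mul_le_mul_of_nonneg_left (hgsq q j) (by positivity)
      _ = (∑ j ∈ range n, (((j : ℝ) + 1) ^ 2)⁻¹) * c' ^ 2 := by
          rw [Finset.sum_mul]
      _ ≤ 2 * c' ^ 2 :=
          mul_le_mul_of_nonneg_right (sum_inv_sq_le_two n) (by positivity)
  -- L¹ bound
  have hL1 : ∀ q n, ∫ ω, |t q n ω| ∂P ≤ (2 * c' ^ 2 + 1) / 2 := by
    intro q n
    have h1 : ∫ ω, |t q n ω| ∂P ≤ ∫ ω, ((t q n ω) ^ 2 + 1) / 2 ∂P := by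
      refine integral_mono (ht_int q n).abs
        (((htsq_int q n).add (integrable_const 1)).div_const 2) fun ω => ?_
      nlinarith [sq_nonneg (|t q n ω| - 1), sq_abs (t q n ω)]
    have h2 : ∫ ω, ((t q n ω) ^ 2 + 1) / 2 ∂P = ((∫ ω, (t q n ω) ^ 2 ∂P) + 1) / 2 := by
      rw [integral_div, integral_add (htsq_int q n) (integrable_const 1)]
      simp
    rw [h2] at h1
    have := hvar q n
    linarith
  have hsnorm : ∀ q n, eLpNorm (t q n) 1 P ≤ ENNReal.ofReal ((2 * c' ^ 2 + 1) / 2) := by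
    intro q n
    rw [eLpNorm_one_eq_lintegral_enorm,
      ← ofReal_integral_norm_eq_lintegral_enorm (ht_int q n)]
    apply ENNReal.ofReal_le_ofReal
    simpa [Real.norm_eq_abs] using hL1 q n
  -- martingale property
  have hmart : ∀ q, Martingale (t q) ℱ P := by
    intro q
    refine martingale_nat (ht_adp q) (ht_int q) fun n => ?_
    have hsplit : t q (n + 1) = t q n + ((n : ℝ) + 1)⁻¹ • g q n := by
      funext ω
      simp [htdef, Finset.sum_range_succ, smul_eq_mul]
    have h1 : P[t q (n + 1) | ℱ n]
        =ᵐ[P] P[t q n | ℱ n] + P[((n : ℝ) + 1)⁻¹ • g q n | ℱ n] := by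
      rw [hsplit]
      exact condExp_add (ht_int q n) ((hgint q n).smul _) _
    have h2 : P[t q n | ℱ n] = t q n :=
      condExp_of_stronglyMeasurable (ℱ.le n) (ht_adp q n) (ht_int q n)
    have h3 : P[((n : ℝ) + 1)⁻¹ • g q n | ℱ n] =ᵐ[P] 0 := by
      refine (condExp_smul _ _ _).trans ?_
      filter_upwards [hgcond q n] with ω hω
      simp only [Pi.smul_apply, Pi.zero_apply] at hω ⊢
      rw [hω, smul_zero]
    filter_upwards [h1, h3] with ω h1ω h3ω
    rw [h1ω, Pi.add_apply, h2, h3ω, Pi.zero_apply, add_zero]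
  -- almost sure convergence of the coordinate martingales
  have hconv : ∀ q : Fin m, ∀ᵐ ω ∂P, ∃ l, Tendsto (fun n => t q n ω) atTop (nhds l) := by
    intro q
    refine (hmart q).submartingale.exists_ae_tendsto_of_bdd
      (R := ((2 * c' ^ 2 + 1) / 2).toNNReal) fun n => ?_
    refine (hsnorm q n).trans ?_
    rw [ENNReal.ofReal]
  -- almost sure set
  have hZmem : ∀ᵐ ω ∂P, ∀ k, Z k ω ∈ G := ae_all_iff.mpr hZG
  have hconv' : ∀ᵐ ω ∂P, ∀ q : Fin m, ∃ l, Tendsto (fun n => t q n ω) atTop (nhds l) :=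
    ae_all_iff.mpr hconv
  filter_upwards [hconv', hZmem] with ω hω hZω
  set v : ℕ → EuclideanSpace ℝ (Fin m) :=
    fun n => (n : ℝ)⁻¹ • ∑ k ∈ range n, M k ω with hvdef
  have hcoord : ∀ q : Fin m,
      Tendsto (fun n => (EuclideanSpace.proj q) (v n)) atTop (nhds 0) := by
    intro q
    obtain ⟨l, hl⟩ := hω q
    have hl' : Tendsto (fun n : ℕ => ∑ k ∈ range n, ((k : ℝ) + 1)⁻¹ • g q k ω)
        atTop (nhds l) := by
      refine hl.congr fun n => Finset.sum_congr rfl fun k _ => ?_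
      rw [smul_eq_mul]
    have hk := kronecker_aux hl'
    have hvq : ∀ n : ℕ, (EuclideanSpace.proj q) (v n)
        = (n : ℝ)⁻¹ • ∑ k ∈ range n, g q k ω := by
      intro n
      rw [hvdef]
      rw [_root_.map_smul, map_sum]
      rfl
    exact hk.congr fun n => (hvq n).symm
  have hnorm : Tendsto (fun n => ‖v n‖) atTop (nhds 0) := by
    have hsum2 : Tendsto (fun n => ∑ q : Fin m, ‖v n q‖ ^ 2) atTop (nhds 0) := by
      have h0 : ∀ q : Fin m,
          Tendsto (fun n => ‖(EuclideanSpace.proj q) (v n)‖ ^ 2) atTop (nhds 0) := by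
        intro q
        have := (hcoord q).norm.mul (hcoord q).norm
        simpa [sq] using this
      have := tendsto_finset_sum Finset.univ (fun q (_ : q ∈ Finset.univ) => h0 q)
      simpa using this
    have hs := (Real.continuous_sqrt.tendsto 0).comp hsum2
    simp only [Function.comp_def, Real.sqrt_zero] at hs
    refine Tendsto.congr (fun n => ?_) hs
    exact (EuclideanSpace.norm_eq _).symm
  have hv0 : Tendsto v atTop (nhds 0) := tendsto_zero_iff_norm_tendsto_zero.mpr hnorm
  have hz : ∀ n : ℕ, 1 ≤ n → ((n : ℝ))⁻¹ • ∑ i ∈ range n, Z i ω ∈ G := by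
    intro n hn
    have hne : ((n : ℝ)) ≠ 0 := by
      exact_mod_cast (Nat.pos_of_ne_zero (by omega)).ne'
    rw [Finset.smul_sum]
    refine hGconv.sum_mem (fun i _ => by positivity) ?_ (fun i _ => hZω i)
    rw [Finset.sum_const, Finset.card_range, nsmul_eq_mul, mul_inv_cancel₀ hne]
  refine squeeze_zero' (Eventually.of_forall fun n => Metric.infDist_nonneg) ?_ hnorm
  filter_upwards [eventually_ge_atTop 1] with n hn
  have hA : (n : ℝ)⁻¹ • ∑ i ∈ range n, X i ω
      = v n + (n : ℝ)⁻¹ • ∑ i ∈ range n, Z i ω := by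
    rw [hvdef]
    simp only [hX]
    rw [Finset.sum_add_distrib, smul_add]
  rw [hA]
  refine (Metric.infDist_le_dist_of_mem (hz n hn)).trans (le_of_eq ?_)
  rw [dist_eq_norm, add_sub_cancel_right]
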